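/- k-abelian equivalence is a congruence: if u ∼_k u' and v ∼_k v', then uv ∼_k u'v'. -/

import Mathlib

/-- Number of occurrences of `w` as a (contiguous) factor of `u`. -/
def occ {A : Type*} [DecidableEq A] (w u : List A) : ℕ :=
  ((Finset.range (u.length + 1 - w.length)).filter
    (fun i => (u.drop i).take w.length = w)).card

/-- `k`-abelian equivalence. -/
def KAbelianEq {A : Type*} [DecidableEq A] (k : ℕ) (u v : List A) : Prop :=
  ∀ w : List A, w ≠ [] → w.length ≤ k → occ w u = occ w v

namespace KAbAux

variable {A : Type*} [DecidableEq A]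

/-- Variant of `occ` as a sum over all positions. -/
def occ2 (w u : List A) : ℕ :=
  ∑ i ∈ Finset.range (u.length + 1), if (u.drop i).take w.length = w then 1 else 0

lemma occ_eq_occ2 (w u : List A) (hw : w ≠ []) : occ w u = occ2 w u := by
  have hwl : 0 < w.length := List.length_pos_iff.2 hw
  rw [occ, Finset.card_filter, occ2]
  refine Finset.sum_subset (Finset.range_subset_range.2 (by omega)) ?_
  intro i hi hni
  rw [if_neg]
  intro h
  have hl := congrArg List.length h
  simp only [List.length_take, List.length_drop] at hl
  simp only [Finset.mem_range] at hi hni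
  omega

lemma occ2_cons (w : List A) (a : A) (u : List A) :
    occ2 w (a :: u) = (if (a :: u).take w.length = w then 1 else 0) + occ2 w u := by
  rw [occ2, List.length_cons, Finset.sum_range_succ']
  simp only [List.drop_succ_cons, List.drop_zero]
  rw [occ2]
  omega

lemma occ2_small (w u : List A) (h : u.length < w.length) : occ2 w u = 0 := by
  rw [occ2]
  refine Finset.sum_eq_zero fun i hi => ?_
  rw [if_neg]
  intro hc
  have hl := congrArg List.length hc
  simp only [List.length_take, List.length_drop] at hl
  omega

set_option linter.unusedSectionVars false in
lemma take_append_take (a : A) (u v : List A) (m : ℕ) :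
    ((a :: u) ++ v).take m = ((a :: u) ++ v.take (m - 1)).take m := by
  rw [List.take_append, List.take_append, List.take_take,
    Nat.min_eq_left (by simp only [List.length_cons]; omega)]

lemma occ2_split_right (w v : List A) (hw : 0 < w.length) :
    ∀ u : List A, occ2 w (u ++ v) = occ2 w (u ++ v.take (w.length - 1)) + occ2 w v
  | [] => by
      simp only [List.nil_append]
      rw [occ2_small w (v.take (w.length - 1)) (by
        have := List.length_take_le (w.length - 1) v
        omega)]
      omega
  | a :: u => by
      rw [List.cons_append, List.cons_append, occ2_cons, occ2_cons,
        occ2_split_right w v hw u]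
      have h := take_append_take a u v w.length
      simp only [List.cons_append] at h
      rw [h]
      omega

lemma occ2_split_left (w v : List A) (hw : 0 < w.length) :
    ∀ u : List A, occ2 w (u ++ v) = occ2 w u + occ2 w (u.drop (u.length - (w.length - 1)) ++ v)
  | [] => by
      simp only [List.nil_append, List.drop_nil]
      rw [occ2_small w [] (by simpa using hw)]
      omega
  | a :: u => by
      by_cases h : u.length + 2 ≤ w.length
      · have h0 : (a :: u).length - (w.length - 1) = 0 := by
          simp only [List.length_cons]; omega
        rw [h0, List.drop_zero, occ2_small w (a :: u) (by simp only [List.length_cons]; omega)]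
        omega
      · have h1 : (a :: u).length - (w.length - 1) = (u.length - (w.length - 1)) + 1 := by
          simp only [List.length_cons]; omega
        rw [List.cons_append, occ2_cons, occ2_split_left w v hw u, h1, List.drop_succ_cons,
          occ2_cons]
        have ht : ((a :: u) ++ v).take w.length = (a :: u).take w.length := by
          apply List.take_append_of_le_length
          simp only [List.length_cons]; omega
        rw [List.cons_append] at ht
        rw [ht]
        omega

lemma occ2_singleton (a : A) : ∀ u : List A, occ2 [a] u = u.count a
  | [] => by simp [occ2]
  | b :: u => by
      rw [occ2_cons, occ2_singleton a u, List.count_cons]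
      have h2 : ([a] : List A).length = 1 := rfl
      have h1 : List.take (1 : ℕ) (b :: u) = [b] := rfl
      rw [h2, h1]
      by_cases hba : b = a
      · subst hba; simp [Nat.add_comm]
      · rw [if_neg (by simp [hba]), if_neg (by simp [hba])]
        omega

lemma length_eq_of_kab {k : ℕ} {u u' : List A} (hk : 1 ≤ k) (h : KAbelianEq k u u') :
    u.length = u'.length := by
  classical
  have hc : ∀ a : A, u.count a = u'.count a := fun a => by
    rw [← occ2_singleton, ← occ2_singleton, ← occ_eq_occ2 _ _ (by simp),
      ← occ_eq_occ2 _ _ (by simp)]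
    exact h [a] (by simp) (by simpa using hk)
  set T := (u ++ u').toFinset with hT
  have key : ∀ x : List A, x.toFinset ⊆ T → x.length = ∑ a ∈ T, x.count a := by
    intro x hx
    rw [← List.sum_toFinset_count_eq_length x]
    refine Finset.sum_subset hx fun a _ ha => ?_
    rw [List.count_eq_zero_of_not_mem (by simpa using ha)]
  have h1 : u.toFinset ⊆ T := by
    rw [hT, List.toFinset_append]; exact Finset.subset_union_left
  have h2 : u'.toFinset ⊆ T := by
    rw [hT, List.toFinset_append]; exact Finset.subset_union_right
  rw [key u h1, key u' h2]
  exact Finset.sum_congr rfl fun a _ => hc a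

lemma occ2_prefix_char : ∀ (u : List A) (x : List A), x ≠ [] → ∀ T : Finset A,
    (∀ a ∈ u, a ∈ T) →
    occ2 x u = (∑ a ∈ T, occ2 (a :: x) u) + (if x <+: u then 1 else 0)
  | [], x, hx, T, hT => by
      rw [occ2_small _ _ (by simpa using List.length_pos_iff.2 hx),
        if_neg (fun hc => hx (List.prefix_nil.1 hc)),
        Finset.sum_eq_zero (fun a _ => occ2_small _ _ (by simp))]
  | b :: u, x, hx, T, hT => by
      have hb : b ∈ T := hT b List.mem_cons_self
      have hbb := hb
      have ihh := occ2_prefix_char u x hx T (fun a ha => hT a (List.mem_cons_of_mem b ha))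
      have hstep : ∀ a : A, occ2 (a :: x) (b :: u)
          = (if a = b ∧ x <+: u then 1 else 0) + occ2 (a :: x) u := by
        intro a
        rw [occ2_cons]
        congr 1
        have hl : (a :: x).length = x.length + 1 := rfl
        rw [hl, List.take_succ_cons]
        have hiff : (b :: List.take x.length u = a :: x) ↔ (a = b ∧ x <+: u) := by
          rw [List.cons_eq_cons]
          constructor
          · rintro ⟨rfl, h2⟩
            exact ⟨rfl, List.prefix_iff_eq_take.2 h2.symm⟩
          · rintro ⟨rfl, h2⟩
            exact ⟨rfl, (List.prefix_iff_eq_take.1 h2).symm⟩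
        rw [if_congr hiff rfl rfl]
      rw [occ2_cons, ihh]
      simp only [hstep]
      rw [Finset.sum_add_distrib]
      have hsum : (∑ a ∈ T, if a = b ∧ x <+: u then 1 else 0)
          = if x <+: u then 1 else 0 := by
        by_cases hpu : x <+: u
        · rw [if_pos hpu]
          have hAB : ∀ a : A, (a = b ∧ x <+: u) = (a = b) := fun a => by simp [hpu]
          simp only [hAB]
          rw [Finset.sum_ite_eq' T b (fun _ => 1), if_pos hb]
        · simp [hpu]
      rw [hsum]
      have hhd : ((b :: u).take x.length = x) ↔ (x <+: b :: u) := by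
        rw [List.prefix_iff_eq_take, eq_comm]
      rw [if_congr hhd rfl rfl]
      omega

lemma occ2_suffix_char : ∀ (u : List A) (x : List A), x ≠ [] → ∀ T : Finset A,
    (∀ a ∈ u, a ∈ T) →
    occ2 x u = (∑ a ∈ T, occ2 (x ++ [a]) u) + (if x <:+ u then 1 else 0)
  | [], x, hx, T, hT => by
      rw [occ2_small _ _ (by simpa using List.length_pos_iff.2 hx),
        if_neg (fun hc => hx (List.suffix_nil.1 hc)),
        Finset.sum_eq_zero (fun a _ => occ2_small _ _ (by simp))]
  | b :: u, x, hx, T, hT => by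
      have ihh := occ2_suffix_char u x hx T (fun a ha => hT a (List.mem_cons_of_mem b ha))
      have hstep : ∀ a : A, occ2 (x ++ [a]) (b :: u)
          = (if (b :: u).take (x.length + 1) = x ++ [a] then 1 else 0) + occ2 (x ++ [a]) u := by
        intro a
        rw [occ2_cons, List.length_append, List.length_singleton]
      rw [occ2_cons, ihh]
      simp only [hstep]
      rw [Finset.sum_add_distrib]
      have key : (if (b :: u).take x.length = x then 1 else 0) + (if x <:+ u then 1 else 0)
          = (∑ a ∈ T, if (b :: u).take (x.length + 1) = x ++ [a] then 1 else 0)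
            + (if x <:+ b :: u then 1 else 0) := by
        rcases lt_trichotomy x.length (u.length + 1) with h | h | h
        · -- x.length ≤ u.length
          have hxu : x ≠ b :: u := by
            intro hc; rw [hc] at h; simp only [List.length_cons] at h; omega
          have hsc : (x <:+ b :: u) ↔ (x <:+ u) := by
            rw [List.suffix_cons_iff]
            simp [hxu]
          rw [if_congr hsc rfl rfl]
          congr 1
          by_cases hp : (b :: u).take x.length = x
          · have hlt : x.length < (b :: u).length := by
              simp only [List.length_cons]; omega
            set c := (b :: u).get ⟨x.length, hlt⟩ with hc
            have hcT : c ∈ T := hT _ (List.get_mem _ _)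
            have htc : (b :: u).take (x.length + 1) = x ++ [c] := by
              rw [List.take_succ, hp]
              congr 1
              rw [List.getElem?_eq_getElem hlt]
              rfl
            rw [if_pos hp]
            have hcond : ∀ a : A, ((b :: u).take (x.length + 1) = x ++ [a]) ↔ a = c := by
              intro a
              rw [htc]
              constructor
              · intro hh
                have := List.append_cancel_left hh
                simpa using this.symm
              · rintro rfl; rfl
            simp only [hcond]
            rw [Finset.sum_ite_eq' T c (fun _ => 1), if_pos hcT]
          · rw [if_neg hp, eq_comm]
            refine Finset.sum_eq_zero fun a _ => ?_
            rw [if_neg]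
            intro hc
            apply hp
            have h2 := congrArg (List.take x.length) hc
            rwa [List.take_take, Nat.min_eq_left (Nat.le_succ _), List.take_left] at h2
        · -- x.length = u.length + 1
          have hxu : x <:+ u → False := fun hc => by
            have := hc.length_le; omega
          have htk : (b :: u).take x.length = b :: u := by
            apply List.take_of_length_le
            simp only [List.length_cons]; omega
          have hsum0 : (∑ a ∈ T, if (b :: u).take (x.length + 1) = x ++ [a] then 1 else 0)
              = 0 := by
            refine Finset.sum_eq_zero fun a _ => ?_
            rw [if_neg]
            intro hcon
            have := congrArg List.length hcon
            simp only [List.length_take, List.length_cons, List.length_append,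
              List.length_singleton] at this
            omega
          have hbc : ((b :: u).take x.length = x) ↔ (x <:+ b :: u) := by
            rw [htk]
            constructor
            · intro hh; rw [← hh]
            · intro hh
              exact (List.IsSuffix.eq_of_length hh (by simp only [List.length_cons]; omega)).symm
          rw [hsum0, if_congr hbc rfl rfl, if_neg hxu]
          omega
        · -- x.length > u.length + 1
          have h1 : (b :: u).take x.length ≠ x := by
            intro hc
            have := congrArg List.length hc
            simp only [List.length_take, List.length_cons] at this
            omega
          have h2 : x <:+ u → False := fun hc => by
            have := hc.length_le; omega
          have h3 : x <:+ b :: u → False := fun hc => by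
            have := hc.length_le
            simp only [List.length_cons] at this
            omega
          have hsum0 : (∑ a ∈ T, if (b :: u).take (x.length + 1) = x ++ [a] then 1 else 0)
              = 0 := by
            refine Finset.sum_eq_zero fun a _ => ?_
            rw [if_neg]
            intro hcon
            have := congrArg List.length hcon
            simp only [List.length_take, List.length_cons, List.length_append,
              List.length_singleton] at this
            omega
          rw [hsum0, if_neg h1, if_neg h2, if_neg h3]
      omega

lemma prefix_iff_of_kab {k : ℕ} {u u' : List A} (h : KAbelianEq k u u') (x : List A)
    (hx : x ≠ []) (hxk : x.length + 1 ≤ k) : x <+: u ↔ x <+: u' := by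
  classical
  set T := (u ++ u').toFinset with hT
  have h1 := occ2_prefix_char u x hx T (fun a ha => by simp [hT, ha])
  have h2 := occ2_prefix_char u' x hx T (fun a ha => by simp [hT, ha])
  have e0 : occ2 x u = occ2 x u' := by
    rw [← occ_eq_occ2 _ _ hx, ← occ_eq_occ2 _ _ hx]
    exact h x hx (by omega)
  have es : ∀ a ∈ T, occ2 (a :: x) u = occ2 (a :: x) u' := fun a _ => by
    rw [← occ_eq_occ2 _ _ (by simp), ← occ_eq_occ2 _ _ (by simp)]
    exact h (a :: x) (by simp) (by simp only [List.length_cons]; omega)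
  rw [h1, h2, Finset.sum_congr rfl es] at e0
  constructor <;> intro hp
  · by_contra hq; rw [if_pos hp, if_neg hq] at e0; omega
  · by_contra hq; rw [if_neg hq, if_pos hp] at e0; omega

lemma suffix_iff_of_kab {k : ℕ} {u u' : List A} (h : KAbelianEq k u u') (x : List A)
    (hx : x ≠ []) (hxk : x.length + 1 ≤ k) : x <:+ u ↔ x <:+ u' := by
  classical
  set T := (u ++ u').toFinset with hT
  have h1 := occ2_suffix_char u x hx T (fun a ha => by simp [hT, ha])
  have h2 := occ2_suffix_char u' x hx T (fun a ha => by simp [hT, ha])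
  have e0 : occ2 x u = occ2 x u' := by
    rw [← occ_eq_occ2 _ _ hx, ← occ_eq_occ2 _ _ hx]
    exact h x hx (by omega)
  have es : ∀ a ∈ T, occ2 (x ++ [a]) u = occ2 (x ++ [a]) u' := fun a _ => by
    rw [← occ_eq_occ2 _ _ (by simp), ← occ_eq_occ2 _ _ (by simp)]
    exact h (x ++ [a]) (by simp) (by
      simp only [List.length_append, List.length_singleton]; omega)
  rw [h1, h2, Finset.sum_congr rfl es] at e0
  constructor <;> intro hp
  · by_contra hq; rw [if_pos hp, if_neg hq] at e0; omega
  · by_contra hq; rw [if_neg hq, if_pos hp] at e0; omega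

lemma take_eq_of_kab {k : ℕ} {v v' : List A} (h : KAbelianEq k v v') (j : ℕ)
    (hj : j + 1 ≤ k) : v.take j = v'.take j := by
  rcases Nat.eq_zero_or_pos j with rfl | hj0
  · simp
  have hlen : v.length = v'.length := length_eq_of_kab (by omega) h
  rcases eq_or_ne v [] with rfl | hv
  · have hv' : v' = [] := List.length_eq_zero_iff.1 (by simpa using hlen.symm)
    rw [hv']
  by_cases hvj : v.length ≤ j
  · have hp : v <+: v' := (prefix_iff_of_kab h v hv (by omega)).1 (List.prefix_refl v)
    rw [List.IsPrefix.eq_of_length hp hlen]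
  · set x := v.take j with hxdef
    have hxl : x.length = j := by
      rw [hxdef, List.length_take]; omega
    have hx : x ≠ [] := by
      intro hc; rw [hc] at hxl; simp at hxl; omega
    have hp : x <+: v' := (prefix_iff_of_kab h x hx (by omega)).1 (List.take_prefix j v)
    rw [List.prefix_iff_eq_take, hxl] at hp
    exact hp

lemma drop_eq_of_kab {k : ℕ} {u u' : List A} (h : KAbelianEq k u u') (j : ℕ)
    (hj : j + 1 ≤ k) : u.drop (u.length - j) = u'.drop (u'.length - j) := by
  rcases Nat.eq_zero_or_pos j with rfl | hj0
  · simp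
  have hlen : u.length = u'.length := length_eq_of_kab (by omega) h
  rcases eq_or_ne u [] with rfl | hu
  · have hu' : u' = [] := List.length_eq_zero_iff.1 (by simpa using hlen.symm)
    rw [hu']
  by_cases huj : u.length ≤ j
  · have hp : u <:+ u' := (suffix_iff_of_kab h u hu (by omega)).1 (List.suffix_refl u)
    rw [List.IsSuffix.eq_of_length hp hlen]
  · set x := u.drop (u.length - j) with hxdef
    have hxl : x.length = j := by
      rw [hxdef, List.length_drop]; omega
    have hx : x ≠ [] := by
      intro hc; rw [hc] at hxl; simp at hxl; omega
    have hs : x <:+ u' := (suffix_iff_of_kab h x hx (by omega)).1 (List.drop_suffix _ u)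
    obtain ⟨t, ht⟩ := hs
    rw [← ht, List.length_append, hxl, Nat.add_sub_cancel, List.drop_left]

end KAbAux

theorem kabelian_congruence {A : Type*} [DecidableEq A] (k : ℕ)
    (u u' v v' : List A) (hu : KAbelianEq k u u') (hv : KAbelianEq k v v') :
    KAbelianEq k (u ++ v) (u' ++ v') := by
  intro w hw hwk
  have hwl : 0 < w.length := List.length_pos_iff.2 hw
  rw [KAbAux.occ_eq_occ2 _ _ hw, KAbAux.occ_eq_occ2 _ _ hw,
    KAbAux.occ2_split_left w v hwl u, KAbAux.occ2_split_left w v' hwl u',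
    KAbAux.occ2_split_right w (v := v) hwl, KAbAux.occ2_split_right w (v := v') hwl]
  have h1 : KAbAux.occ2 w u = KAbAux.occ2 w u' := by
    rw [← KAbAux.occ_eq_occ2 _ _ hw, ← KAbAux.occ_eq_occ2 _ _ hw]; exact hu w hw hwk
  have h2 : KAbAux.occ2 w v = KAbAux.occ2 w v' := by
    rw [← KAbAux.occ_eq_occ2 _ _ hw, ← KAbAux.occ_eq_occ2 _ _ hw]; exact hv w hw hwk
  have h3 : u.drop (u.length - (w.length - 1)) = u'.drop (u'.length - (w.length - 1)) :=
    KAbAux.drop_eq_of_kab hu (w.length - 1) (by omega)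
  have h4 : v.take (w.length - 1) = v'.take (w.length - 1) :=
    KAbAux.take_eq_of_kab hv (w.length - 1) (by omega)
  rw [h1, h2, h3, h4]
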